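/- For three agents with binary valuations satisfying the no-chore assumption, if for every item a there exists an agent i such that V_i(i,a)=V_i(j,a) for all j (i.e., assigning a anywhere never makes i envious), then an EF1 allocation exists. -/

import Mathlib

open Finset

noncomputable section

/-- Value agent `i` derives from allocation `π`, restricted to the items in `S`
(with additive externalities: `V i j a` is the value `i` gets when item `a` goes to `j`). -/
def alval {α N : Type*} [DecidableEq α] (V : N → N → α → ℝ) (i : N) (π : α → N)
    (S : Finset α) : ℝ := ∑ a ∈ S, V i (π a) a

/-- The allocation obtained from `π` by swapping the bundles of agents `i` and `j`. -/
def swapAlloc {α N : Type*} [DecidableEq N] (i j : N) (π : α → N) : α → N :=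
  fun a => Equiv.swap i j (π a)

/-- Agent `i` envies agent `j` in allocation `π`. -/
def Envies {α N : Type*} [Fintype α] [DecidableEq α] [DecidableEq N]
    (V : N → N → α → ℝ) (π : α → N) (i j : N) : Prop :=
  alval V i π univ < alval V i (swapAlloc i j π) univ

/-- Envy-freeness up to any item, under externalities. -/
def EFX {α N : Type*} [Fintype α] [DecidableEq α] [DecidableEq N]
    (V : N → N → α → ℝ) (π : α → N) : Prop :=
  ∀ i j : N, Envies V π i j → ∀ a : α,
    alval V i π (univ.erase a) - alval V i (swapAlloc i j π) (univ.erase a) >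
      alval V i π univ - alval V i (swapAlloc i j π) univ →
    alval V i (swapAlloc i j π) (univ.erase a) ≤ alval V i π (univ.erase a)

/-- Envy-freeness up to one item, under externalities. -/
def EF1 {α N : Type*} [Fintype α] [DecidableEq α] [DecidableEq N]
    (V : N → N → α → ℝ) (π : α → N) : Prop :=
  ∀ i j : N, ∃ C : Finset α, C.card ≤ 1 ∧
    alval V i (swapAlloc i j π) (univ \ C) ≤ alval V i π (univ \ C)

/-- Sum of a 0/1-valued function equals the number of points where it is 1. -/
lemma sum_binary01 {α : Type*} [DecidableEq α] (g : α → ℝ)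
    [DecidablePred fun a => g a = 1]
    (hg : ∀ a, g a = 0 ∨ g a = 1) (T : Finset α) :
    ∑ a ∈ T, g a = (T.filter (fun a => g a = 1)).card := by
  classical
  rw [← Finset.sum_filter_add_sum_filter_not T (fun a => g a = 1)]
  have h1 : ∑ a ∈ T.filter (fun a => g a = 1), g a
      = (T.filter (fun a => g a = 1)).card := by
    rw [Finset.sum_congr rfl (fun a ha => (Finset.mem_filter.mp ha).2)]
    simp
  have h2 : ∑ a ∈ T.filter (fun a => ¬ g a = 1), g a = 0 := by
    apply Finset.sum_eq_zero
    intro a ha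
    rcases hg a with h | h
    · exact h
    · exact absurd h (Finset.mem_filter.mp ha).2
  rw [h1, h2, add_zero]

/-- First of the two non-`k` agents. -/
def ppAg : Fin 3 → Fin 3 := fun k => if k = 0 then 1 else 0

/-- Second of the two non-`k` agents. -/
def qqAg : Fin 3 → Fin 3 := fun k => if k = 2 then 1 else 2

lemma ppAg_ne (k : Fin 3) : ppAg k ≠ k := by revert k; decide

lemma qqAg_ne (k : Fin 3) : qqAg k ≠ k := by revert k; decide

lemma ppAg_ne_qqAg (k : Fin 3) : ppAg k ≠ qqAg k := by revert k; decide

lemma third_exists (i j : Fin 3) (hij : i ≠ j) :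
    ∃ k : Fin 3, k ≠ i ∧ k ≠ j ∧
      ((ppAg k = i ∧ qqAg k = j) ∨ (ppAg k = j ∧ qqAg k = i)) := by
  revert i j; decide

lemma third_unique (i j k x : Fin 3) (hki : k ≠ i) (hkj : k ≠ j) (hij : i ≠ j)
    (hxi : x ≠ i) (hxj : x ≠ j) : x = k := by
  revert i j k x; decide

/-- For three agents with binary valuations satisfying the no-chore
assumption, if for every item `a` there exists an agent `i` such that
`V i i a = V i j a` for all `j` (assigning `a` anywhere never makes `i` envious),
then an EF1 allocation exists. -/
theorem ef1_exists_three_agents_binary_nochore {α : Type*} [Fintype α] [DecidableEq α]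
    (V : Fin 3 → Fin 3 → α → ℝ)
    (hbin : ∀ i j a, V i j a = 0 ∨ V i j a = 1)
    (hnochore : ∀ i j a, V i j a ≤ V i i a)
    (hfree : ∀ a : α, ∃ i : Fin 3, ∀ j : Fin 3, V i j a = V i i a) :
    ∃ π : α → Fin 3, EF1 V π := by
  classical
  choose f hf using hfree
  set d : Fin 3 → Fin 3 → α → ℝ := fun i j a => V i i a - V i j a with hd
  have hd01 : ∀ i j a, d i j a = 0 ∨ d i j a = 1 := by
    intro i j a
    have h := hnochore i j a
    rcases hbin i i a with h1 | h1 <;> rcases hbin i j a with h2 | h2 <;>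
      simp only [hd, h1, h2] <;> [left; left; right; left] <;> linarith
  have hdf : ∀ a j, d (f a) j a = 0 := by
    intro a j
    simp [hd, hf a j]
  set B : Fin 3 → Finset α := fun k => univ.filter
      (fun a => f a = k ∧ d (ppAg k) (qqAg k) a = 1 ∧ d (qqAg k) (ppAg k) a = 1) with hB
  have hHex : ∀ k : Fin 3, ∃ t ⊆ B k, t.card = ((B k).card + 1) / 2 :=
    fun k => Finset.exists_subset_card_eq (by omega)
  choose Hs hHsub hHcard using hHex
  set π : α → Fin 3 := fun a =>
    if a ∈ B (f a) then (if a ∈ Hs (f a) then ppAg (f a) else qqAg (f a))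
    else if d (ppAg (f a)) (qqAg (f a)) a = 1 then ppAg (f a) else qqAg (f a) with hπ
  have hπne : ∀ a, π a ≠ f a := by
    intro a
    simp only [hπ]
    split_ifs <;> first | exact ppAg_ne _ | exact qqAg_ne _
  refine ⟨π, ?_⟩
  intro i j
  by_cases hij : i = j
  · subst hij
    refine ⟨∅, by simp, le_of_eq ?_⟩
    unfold alval swapAlloc
    simp [Equiv.swap_self]
  · obtain ⟨k, hki, hkj, hrole⟩ := third_exists i j hij
    set Sj := univ.filter (fun a => π a = j ∧ d i j a = 1) with hSj
    set Si := univ.filter (fun a => π a = i ∧ d i j a = 1) with hSi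
    have hfk : ∀ a ∈ Sj, f a = k := by
      intro a ha
      rw [hSj, mem_filter] at ha
      obtain ⟨-, hπa, hda⟩ := ha
      have h1 : f a ≠ i := by
        intro h
        rw [← h] at hda
        rw [hdf a j] at hda
        norm_num at hda
      have h2 : f a ≠ j := fun h => hπne a (hπa.trans h.symm)
      exact third_unique i j k (f a) hki hkj hij h1 h2
    have hcard : Sj.card ≤ Si.card + 1 := by
      rcases hrole with ⟨hpk, hqk⟩ | ⟨hpk, hqk⟩
      · -- i = ppAg k, j = qqAg k
        have hSjsub : Sj ⊆ B k \ Hs k := by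
          intro a ha
          have hfa := hfk a ha
          rw [hSj, mem_filter] at ha
          obtain ⟨-, hπa, hda⟩ := ha
          have hda' : d (ppAg k) (qqAg k) a = 1 := by rw [hpk, hqk]; exact hda
          rw [Finset.mem_sdiff]
          by_cases hB1 : a ∈ B (f a)
          · refine ⟨hfa ▸ hB1, ?_⟩
            intro hH
            have : π a = ppAg (f a) := by
              simp only [hπ, if_pos hB1, if_pos (show a ∈ Hs (f a) from hfa ▸ hH)]
            rw [this, hfa, hpk] at hπa
            exact hij hπa
          · exfalso
            have : π a = ppAg (f a) := by
              simp only [hπ, if_neg hB1, if_pos (show d (ppAg (f a)) (qqAg (f a)) a = 1 from hfa ▸ hda')]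
            rw [this, hfa, hpk] at hπa
            exact hij hπa
        have hSisub : Hs k ⊆ Si := by
          intro a ha
          have haB := hHsub k ha
          rw [hB, mem_filter] at haB
          obtain ⟨-, hfa, hd1, hd2⟩ := haB
          rw [hSi, mem_filter]
          refine ⟨mem_univ _, ?_, ?_⟩
          · have hB1 : a ∈ B (f a) := by
              rw [hfa]; exact hHsub k ha
            have hH1 : a ∈ Hs (f a) := by rw [hfa]; exact ha
            simp only [hπ, if_pos hB1, if_pos hH1, hfa, hpk]
            rw [if_pos ha]
          · rw [← hpk, ← hqk]; exact hd1
        have c1 := card_le_card hSjsub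
        have c2 := card_le_card hSisub
        have c3 := card_sdiff_of_subset (hHsub k)
        have c4 := hHcard k
        have c5 := card_le_card (hHsub k)
        omega
      · -- j = ppAg k, i = qqAg k
        have hSjsub : Sj ⊆ Hs k := by
          intro a ha
          have hfa := hfk a ha
          rw [hSj, mem_filter] at ha
          obtain ⟨-, hπa, hda⟩ := ha
          have hda' : d (qqAg k) (ppAg k) a = 1 := by rw [hqk, hpk]; exact hda
          by_cases hB1 : a ∈ B (f a)
          · by_cases hH1 : a ∈ Hs (f a)
            · exact hfa ▸ hH1
            · exfalso
              have : π a = qqAg (f a) := by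
                simp only [hπ, if_pos hB1, if_neg hH1]
              rw [this, hfa, hqk] at hπa
              exact hij hπa
          · exfalso
            by_cases hdp : d (ppAg (f a)) (qqAg (f a)) a = 1
            · apply hB1
              rw [hB, mem_filter, hfa]
              exact ⟨mem_univ _, rfl, hfa ▸ hdp, hfa ▸ hda'⟩
            · have : π a = qqAg (f a) := by
                simp only [hπ, if_neg hB1, if_neg hdp]
              rw [this, hfa, hqk] at hπa
              exact hij hπa
        have hSisub : B k \ Hs k ⊆ Si := by
          intro a ha
          rw [Finset.mem_sdiff] at ha
          obtain ⟨haB, haH⟩ := ha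
          have haB' := haB
          rw [hB, mem_filter] at haB'
          obtain ⟨-, hfa, hd1, hd2⟩ := haB'
          rw [hSi, mem_filter]
          refine ⟨mem_univ _, ?_, ?_⟩
          · have hB1 : a ∈ B (f a) := by rw [hfa]; exact haB
            have hH1 : a ∉ Hs (f a) := by rw [hfa]; exact haH
            simp only [hπ, if_pos hB1, if_neg hH1, hfa, hqk]
            rw [if_neg haH]
          · rw [← hqk, ← hpk]; exact hd2
        have c1 := card_le_card hSjsub
        have c2 := card_le_card hSisub
        have c3 := card_sdiff_of_subset (hHsub k)
        have c4 := hHcard k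
        have c5 := card_le_card (hHsub k)
        omega
    -- choose the removed set C
    obtain ⟨C, hCsub, hCcard, hCle⟩ :
        ∃ C ⊆ Sj, C.card ≤ 1 ∧ (Sj \ C).card ≤ Si.card := by
      by_cases h : Sj.card ≤ Si.card
      · exact ⟨∅, empty_subset _, by simp, by simpa using h⟩
      · have hne : Sj.Nonempty := by
          rw [← card_pos]; omega
        obtain ⟨c, hc⟩ := hne
        refine ⟨{c}, by simpa using hc, by simp, ?_⟩
        rw [card_sdiff_of_subset (by simpa using hc)]
        simp only [card_singleton]
        omega
    refine ⟨C, hCcard, ?_⟩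
    -- the final inequality
    unfold alval swapAlloc
    rw [← sub_nonpos, ← Finset.sum_sub_distrib]
    have hterm : ∀ a, V i (Equiv.swap i j (π a)) a - V i (π a) a =
        (if π a = j then d i j a else 0) - (if π a = i then d i j a else 0) := by
      intro a
      by_cases h1 : π a = i
      · rw [h1, Equiv.swap_apply_left, if_neg hij, if_pos rfl]
        simp only [hd]
        ring
      · by_cases h2 : π a = j
        · rw [h2, Equiv.swap_apply_right, if_pos rfl, if_neg (fun h => hij h.symm)]
          simp only [hd]
          ring
        · rw [Equiv.swap_apply_of_ne_of_ne h1 h2, if_neg h2, if_neg h1]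
          ring
    rw [Finset.sum_congr rfl (fun a _ => hterm a), Finset.sum_sub_distrib,
      ← Finset.sum_filter, ← Finset.sum_filter]
    rw [sum_binary01 (d i j) (hd01 i j), sum_binary01 (d i j) (hd01 i j)]
    have hEj : ((univ \ C).filter (fun a => π a = j)).filter (fun a => d i j a = 1)
        = Sj \ C := by
      ext a
      simp only [mem_filter, Finset.mem_sdiff, mem_univ, true_and, hSj]
      tauto
    have hEi : ((univ \ C).filter (fun a => π a = i)).filter (fun a => d i j a = 1)
        = Si := by
      ext a
      simp only [mem_filter, Finset.mem_sdiff, mem_univ, true_and, hSi]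
      constructor
      · tauto
      · intro h
        refine ⟨⟨?_, h.1⟩, h.2⟩
        intro hC
        have := hCsub hC
        rw [hSj, mem_filter] at this
        exact hij ((h.1.symm.trans this.2.1))
    rw [hEj, hEi, sub_nonpos]
    exact_mod_cast hCle
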